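/- The partial fractal convolution operator P⁰₂ : L^p(I) → L^p(I), P⁰₂(f) = f *_T 0 (1 ≤ p ≤ ∞), satisfies ‖(f *_T 0) − f‖_p ≤ Λ‖f *_T 0‖_p and ‖f‖_p ≤ (1 + Λ)‖f *_T 0‖_p for every f ∈ L^p(I). Consequently P⁰₂ is injective (f *_T 0 = 0 implies f = 0) and has closed range in L^p(I). -/

import Mathlib

open MeasureTheory ENNReal

noncomputable section

/-- The inverse of the increasing affine map `L n` sending `[x 0, x N]` onto
`[x n, x (n+1)]` (so `L n (x 0) = x n.castSucc` and `L n (x N) = x n.succ`). -/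
def Linv {N : ℕ} (x : Fin (N + 1) → ℝ) (n : Fin N) (y : ℝ) : ℝ :=
  x 0 + (y - x n.castSucc) * (x (Fin.last N) - x 0) / (x n.succ - x n.castSucc)

/-- The subinterval `I n` of the partition: `[x 0, x 1]` for `n = 0` and
`(x n, x (n+1)]` otherwise. -/
def subInt {N : ℕ} (x : Fin (N + 1) → ℝ) (n : Fin N) : Set ℝ :=
  if n.val = 0 then Set.Icc (x n.castSucc) (x n.succ)
  else Set.Ioc (x n.castSucc) (x n.succ)

section Aux

variable {N : ℕ} {x : Fin (N + 1) → ℝ}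

lemma pcnb_sub_pos (hx : StrictMono x) (n : Fin N) : 0 < x n.succ - x n.castSucc :=
  sub_pos.2 (hx Fin.castSucc_lt_succ)

lemma pcnb_last_pos (hx : StrictMono x) (hN : 0 < N) : 0 < x (Fin.last N) - x 0 :=
  sub_pos.2 (hx (by rw [Fin.lt_def]; simpa using hN))

lemma pcnb_measurableSet (n : Fin N) : MeasurableSet (subInt x n) := by
  unfold subInt; split
  · exact measurableSet_Icc
  · exact measurableSet_Ioc

lemma pcnb_mem_Icc (hx : StrictMono x) {n : Fin N} {t : ℝ} (ht : t ∈ subInt x n) :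
    x n.castSucc ≤ t ∧ t ≤ x n.succ := by
  unfold subInt at ht; split at ht
  · exact ⟨ht.1, ht.2⟩
  · exact ⟨ht.1.le, ht.2⟩

lemma pcnb_subset (hx : StrictMono x) (n : Fin N) :
    subInt x n ⊆ Set.Icc (x 0) (x (Fin.last N)) := by
  intro t ht
  have h := pcnb_mem_Icc hx ht
  exact ⟨(hx.monotone (Fin.zero_le _)).trans h.1, h.2.trans (hx.monotone (Fin.le_last _))⟩

lemma pcnb_iUnion (hx : StrictMono x) (hN : 0 < N) :
    (⋃ n, subInt x n) = Set.Icc (x 0) (x (Fin.last N)) := by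
  apply Set.Subset.antisymm
  · exact Set.iUnion_subset fun n => pcnb_subset hx n
  · intro t ht
    rw [Set.mem_iUnion]
    by_cases h1 : t ≤ x ((⟨0, hN⟩ : Fin N).succ)
    · refine ⟨⟨0, hN⟩, ?_⟩
      have h0 : ((⟨0, hN⟩ : Fin N).castSucc) = (0 : Fin (N + 1)) := rfl
      simp only [subInt, if_pos rfl]
      exact ⟨h0 ▸ ht.1, h1⟩
    · push_neg at h1
      classical
      have hSne : (Finset.univ.filter fun m : Fin (N + 1) => t ≤ x m).Nonempty :=
        ⟨Fin.last N, by simp [ht.2]⟩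
      set m := (Finset.univ.filter fun m : Fin (N + 1) => t ≤ x m).min' hSne with hm
      have hmS := (Finset.univ.filter fun m : Fin (N + 1) => t ≤ x m).min'_mem hSne
      rw [Finset.mem_filter] at hmS
      have hmt : t ≤ x m := hmS.2
      have hm0 : m ≠ 0 := by
        intro h
        have h2 : t ≤ x ((⟨0, hN⟩ : Fin N).succ) :=
          (h ▸ hmt).trans (hx.monotone (Fin.zero_le _))
        exact absurd h2 (not_le.2 h1)
      refine ⟨m.pred hm0, ?_⟩
      have hsucc : (m.pred hm0).succ = m := Fin.succ_pred m hm0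
      have hvm : m.val ≠ 0 := fun h => hm0 (Fin.ext h)
      have hlt : x ((m.pred hm0).castSucc) < t := by
        by_contra hle
        push_neg at hle
        have hmem : (m.pred hm0).castSucc ∈
            Finset.univ.filter fun m : Fin (N + 1) => t ≤ x m := by
          simp [hle]
        have h2 := Finset.min'_le _ _ hmem
        rw [← hm] at h2
        have h3 : (m.pred hm0).castSucc < m := by
          rw [Fin.lt_def]
          simp only [Fin.coe_castSucc, Fin.coe_pred]
          omega
        exact absurd h2 (not_le.2 h3)
      have hne : (m.pred hm0).val ≠ 0 := by
        intro h0
        apply not_le.2 h1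
        have hc : (m.pred hm0).val = m.val - 1 := rfl
        have he : (m.pred hm0).succ = (⟨0, hN⟩ : Fin N).succ := by
          apply Fin.ext
          show (m.pred hm0).val + 1 = 0 + 1
          omega
        rw [← he, hsucc]
        exact hmt
      simp only [subInt, if_neg hne]
      exact ⟨hlt, by rw [hsucc]; exact hmt⟩

lemma pcnb_disjoint (hx : StrictMono x) :
    Pairwise (Function.onFun Disjoint (subInt x)) := by
  have key : ∀ n m : Fin N, n < m → Disjoint (subInt x n) (subInt x m) := by
    intro n m hnm
    rw [Set.disjoint_left]
    intro t htn htm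
    have h1 : t ≤ x n.succ := (pcnb_mem_Icc hx htn).2
    have hm0 : m.val ≠ 0 := by
      have := Fin.lt_def.1 hnm; omega
    have h2 : x m.castSucc < t := by
      unfold subInt at htm
      rw [if_neg hm0] at htm
      exact htm.1
    have h3 : x n.succ ≤ x m.castSucc := by
      apply hx.monotone
      rw [Fin.le_def]
      have := Fin.lt_def.1 hnm
      simp only [Fin.val_succ, Fin.coe_castSucc]
      omega
    linarith
  intro n m hne
  rcases hne.lt_or_gt with h | h
  · exact key n m h
  · exact (key m n h).symm

lemma pcnb_Linv_eq (n : Fin N) : Linv x n = fun y =>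
    ((x (Fin.last N) - x 0) / (x n.succ - x n.castSucc)) * y +
      (x 0 - x n.castSucc * ((x (Fin.last N) - x 0) / (x n.succ - x n.castSucc))) := by
  funext y; unfold Linv; ring

lemma pcnb_measurable_Linv (n : Fin N) : Measurable (Linv x n) := by
  rw [pcnb_Linv_eq]
  exact (measurable_const_mul _).add_const _

lemma pcnb_Linv_mem (hx : StrictMono x) (hN : 0 < N) (n : Fin N) {t : ℝ}
    (ht : t ∈ subInt x n) : Linv x n t ∈ Set.Icc (x 0) (x (Fin.last N)) := by
  have h := pcnb_mem_Icc hx ht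
  have hb := pcnb_sub_pos hx n
  have hL := pcnb_last_pos hx hN
  have h1 : 0 ≤ (t - x n.castSucc) * (x (Fin.last N) - x 0) / (x n.succ - x n.castSucc) :=
    div_nonneg (mul_nonneg (sub_nonneg.2 h.1) hL.le) hb.le
  have h2 : (t - x n.castSucc) * (x (Fin.last N) - x 0) / (x n.succ - x n.castSucc) ≤
      x (Fin.last N) - x 0 := by
    rw [div_le_iff₀ hb]
    nlinarith [h.2]
  simp only [Linv, Set.mem_Icc]
  constructor <;> linarith

lemma pcnb_map_affine {r : ℝ} (hr : r ≠ 0) (s : ℝ) :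
    Measure.map (fun y : ℝ => r * y + s) volume = ENNReal.ofReal |r⁻¹| • volume := by
  have h : (fun y : ℝ => r * y + s) = (fun y => s + y) ∘ (fun y => r * y) := by
    funext y; simp [add_comm]
  rw [h, ← Measure.map_map (measurable_const_add s) (measurable_const_mul r),
    Real.map_volume_mul_left hr, Measure.map_smul, map_add_left_eq_self]

lemma pcnb_map_le (hx : StrictMono x) (hN : 0 < N) (n : Fin N) :
    Measure.map (Linv x n) (volume.restrict (subInt x n)) ≤
      ENNReal.ofReal ((x n.succ - x n.castSucc) / (x (Fin.last N) - x 0)) •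
        volume.restrict (Set.Icc (x 0) (x (Fin.last N))) := by
  have hr : 0 < (x (Fin.last N) - x 0) / (x n.succ - x n.castSucc) :=
    div_pos (pcnb_last_pos hx hN) (pcnb_sub_pos hx n)
  have hsub : subInt x n ⊆ Linv x n ⁻¹' Set.Icc (x 0) (x (Fin.last N)) :=
    fun t ht => pcnb_Linv_mem hx hN n ht
  calc Measure.map (Linv x n) (volume.restrict (subInt x n))
      ≤ Measure.map (Linv x n)
          (volume.restrict (Linv x n ⁻¹' Set.Icc (x 0) (x (Fin.last N)))) :=
        Measure.map_mono (Measure.restrict_mono hsub le_rfl) (pcnb_measurable_Linv n)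
    _ = (Measure.map (Linv x n) volume).restrict (Set.Icc (x 0) (x (Fin.last N))) :=
        (Measure.restrict_map (pcnb_measurable_Linv n) measurableSet_Icc).symm
    _ = ENNReal.ofReal ((x n.succ - x n.castSucc) / (x (Fin.last N) - x 0)) •
          volume.restrict (Set.Icc (x 0) (x (Fin.last N))) := by
        rw [pcnb_Linv_eq n, pcnb_map_affine hr.ne' _, Measure.restrict_smul]
        congr 1
        rw [abs_of_pos (inv_pos.2 hr), inv_div]

lemma pcnb_qmp (hx : StrictMono x) (hN : 0 < N) (n : Fin N) :
    Measure.QuasiMeasurePreserving (Linv x n) (volume.restrict (subInt x n))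
      (volume.restrict (Set.Icc (x 0) (x (Fin.last N)))) := by
  refine ⟨pcnb_measurable_Linv n, Measure.AbsolutelyContinuous.mk fun s hs h0 => ?_⟩
  have h1 := Measure.le_iff'.1 (pcnb_map_le hx hN n) s
  rw [Measure.smul_apply, h0, smul_eq_mul, mul_zero] at h1
  exact le_antisymm h1 zero_le

lemma pcnb_sum_ratio (hx : StrictMono x) :
    ∑ n : Fin N, (x n.succ - x n.castSucc) = x (Fin.last N) - x 0 := by
  have h := Finset.sum_range_sub (fun i => x ⟨min i N, by omega⟩) N
  have e1 : ∑ n : Fin N, (x n.succ - x n.castSucc)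
      = ∑ i ∈ Finset.range N,
          ((fun i => x ⟨min i N, by omega⟩) (i + 1) - (fun i => x ⟨min i N, by omega⟩) i) := by
    rw [← Fin.sum_univ_eq_sum_range]
    apply Finset.sum_congr rfl
    intro n _
    have hn := n.isLt
    have h1 : (n.succ : Fin (N + 1)) = ⟨min (n.val + 1) N, by omega⟩ := by
      apply Fin.ext; simp only [Fin.val_succ]; omega
    have h2 : (n.castSucc : Fin (N + 1)) = ⟨min n.val N, by omega⟩ := by
      apply Fin.ext; simp only [Fin.coe_castSucc]; omega
    rw [h1, h2]
  rw [e1, h]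
  have hA : (⟨min N N, by omega⟩ : Fin (N + 1)) = Fin.last N := by
    apply Fin.ext; simp [Fin.last]
  have hB : (⟨min 0 N, by omega⟩ : Fin (N + 1)) = (0 : Fin (N + 1)) := by
    apply Fin.ext; simp
  rw [hA, hB]

lemma pcnb_sum_ofReal (hx : StrictMono x) (hN : 0 < N) :
    ∑ n : Fin N, ENNReal.ofReal ((x n.succ - x n.castSucc) / (x (Fin.last N) - x 0)) = 1 := by
  rw [← ENNReal.ofReal_sum_of_nonneg
    (fun n _ => div_nonneg (pcnb_sub_pos hx n).le (pcnb_last_pos hx hN).le),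
    ← Finset.sum_div, pcnb_sum_ratio hx, div_self (pcnb_last_pos hx hN).ne',
    ENNReal.ofReal_one]


lemma pcnb_key (hx : StrictMono x) (hN : 0 < N)
    {μ : Measure ℝ} (hμ : μ = volume.restrict (Set.Icc (x 0) (x (Fin.last N))))
    {p : ℝ≥0∞} (hp : 1 ≤ p) {Λ : ℝ} (α : Fin N → ℝ → ℝ)
    (hbound : ∀ n, ∀ᵐ s ∂μ, (‖α n s‖₊ : ℝ≥0∞) ≤ ENNReal.ofReal Λ)
    (hαm : ∀ n, AEStronglyMeasurable (α n) μ)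
    {g k : ℝ → ℝ} (hg : AEStronglyMeasurable g μ)
    (heq : ∀ n : Fin N, ∀ᵐ t ∂(volume.restrict (subInt x n)),
      k t = α n (Linv x n t) * g (Linv x n t)) :
    eLpNorm k p μ ≤ ENNReal.ofReal Λ * eLpNorm g p μ := by
  have hp0 : p ≠ 0 := (lt_of_lt_of_le zero_lt_one hp).ne'
  have hμsum : μ = Measure.sum fun n : Fin N => volume.restrict (subInt x n) := by
    rw [hμ, ← pcnb_iUnion hx hN,
      Measure.restrict_iUnion (pcnb_disjoint hx) fun n => pcnb_measurableSet n]
  have hqmp : ∀ n : Fin N, Measure.QuasiMeasurePreserving (Linv x n)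
      (volume.restrict (subInt x n)) μ := fun n => hμ ▸ pcnb_qmp hx hN n
  by_cases hptop : p = ∞
  · subst hptop
    rw [eLpNorm_exponent_top, eLpNorm_exponent_top]
    set G := eLpNormEssSup g μ with hGdef
    have hae : ∀ᵐ t ∂μ, (‖k t‖₊ : ℝ≥0∞) ≤ ENNReal.ofReal Λ * G := by
      rw [hμsum, Measure.ae_sum_eq, Filter.eventually_iSup]
      intro n
      filter_upwards [heq n, (hqmp n).ae (hbound n),
        (hqmp n).ae (ae_le_eLpNormEssSup (f := g) (μ := μ))] with t ht hb hG
      rw [ht, nnnorm_mul, ENNReal.coe_mul]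
      exact mul_le_mul' hb hG
    exact essSup_le_of_ae_le _ hae
  · have hq0 : 0 < p.toReal := ENNReal.toReal_pos hp0 hptop
    have hΛq : (ENNReal.ofReal Λ) ^ p.toReal ≠ ∞ :=
      ENNReal.rpow_ne_top_of_nonneg hq0.le ENNReal.ofReal_ne_top
    rw [eLpNorm_eq_lintegral_rpow_enorm_toReal hp0 hptop, eLpNorm_eq_lintegral_rpow_enorm_toReal hp0 hptop]
    simp only [enorm_eq_nnnorm]
    have hG : ∀ n : Fin N, (∫⁻ s, (‖α n s * g s‖₊ : ℝ≥0∞) ^ p.toReal ∂μ) ≤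
        ENNReal.ofReal Λ ^ p.toReal * ∫⁻ s, (‖g s‖₊ : ℝ≥0∞) ^ p.toReal ∂μ := by
      intro n
      rw [← lintegral_const_mul' _ _ hΛq]
      refine lintegral_mono_ae ((hbound n).mono fun s hs => ?_)
      rw [nnnorm_mul, ENNReal.coe_mul, ENNReal.mul_rpow_of_nonneg _ _ hq0.le]
      exact mul_le_mul_of_nonneg_right (ENNReal.rpow_le_rpow hs hq0.le) zero_le
    have hpiece : ∀ n : Fin N,
        (∫⁻ t, (‖k t‖₊ : ℝ≥0∞) ^ p.toReal ∂(volume.restrict (subInt x n))) ≤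
        ENNReal.ofReal ((x n.succ - x n.castSucc) / (x (Fin.last N) - x 0)) *
          (ENNReal.ofReal Λ ^ p.toReal * ∫⁻ s, (‖g s‖₊ : ℝ≥0∞) ^ p.toReal ∂μ) := by
      intro n
      have hφ : AEMeasurable (fun s => (‖α n s * g s‖₊ : ℝ≥0∞) ^ p.toReal)
          (Measure.map (Linv x n) (volume.restrict (subInt x n))) :=
        ((((hαm n).mul hg).enorm).pow_const p.toReal).mono_ac (hqmp n).absolutelyContinuous
      calc (∫⁻ t, (‖k t‖₊ : ℝ≥0∞) ^ p.toReal ∂(volume.restrict (subInt x n)))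
          = ∫⁻ t, (fun s => (‖α n s * g s‖₊ : ℝ≥0∞) ^ p.toReal) (Linv x n t)
              ∂(volume.restrict (subInt x n)) :=
            lintegral_congr_ae ((heq n).mono fun t ht => by simp only [ht])
        _ = ∫⁻ s, (‖α n s * g s‖₊ : ℝ≥0∞) ^ p.toReal
              ∂(Measure.map (Linv x n) (volume.restrict (subInt x n))) :=
            (lintegral_map' hφ (pcnb_measurable_Linv n).aemeasurable).symm
        _ ≤ ∫⁻ s, (‖α n s * g s‖₊ : ℝ≥0∞) ^ p.toReal
              ∂(ENNReal.ofReal ((x n.succ - x n.castSucc) / (x (Fin.last N) - x 0)) • μ) :=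
            lintegral_mono' (hμ ▸ pcnb_map_le hx hN n) le_rfl
        _ = ENNReal.ofReal ((x n.succ - x n.castSucc) / (x (Fin.last N) - x 0)) *
              ∫⁻ s, (‖α n s * g s‖₊ : ℝ≥0∞) ^ p.toReal ∂μ := lintegral_smul_measure _ _
        _ ≤ _ := mul_le_mul_of_nonneg_left (hG n) zero_le
    have htotal : (∫⁻ t, (‖k t‖₊ : ℝ≥0∞) ^ p.toReal ∂μ) ≤
        ENNReal.ofReal Λ ^ p.toReal * ∫⁻ s, (‖g s‖₊ : ℝ≥0∞) ^ p.toReal ∂μ := by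
      calc (∫⁻ t, (‖k t‖₊ : ℝ≥0∞) ^ p.toReal ∂μ)
          = ∑ n : Fin N, ∫⁻ t, (‖k t‖₊ : ℝ≥0∞) ^ p.toReal ∂(volume.restrict (subInt x n)) := by
            conv_lhs => rw [hμsum]
            rw [lintegral_sum_measure, tsum_fintype]
        _ ≤ ∑ n : Fin N, ENNReal.ofReal ((x n.succ - x n.castSucc) / (x (Fin.last N) - x 0)) *
              (ENNReal.ofReal Λ ^ p.toReal * ∫⁻ s, (‖g s‖₊ : ℝ≥0∞) ^ p.toReal ∂μ) :=
            Finset.sum_le_sum fun n _ => hpiece n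
        _ = (∑ n : Fin N, ENNReal.ofReal ((x n.succ - x n.castSucc) / (x (Fin.last N) - x 0))) *
              (ENNReal.ofReal Λ ^ p.toReal * ∫⁻ s, (‖g s‖₊ : ℝ≥0∞) ^ p.toReal ∂μ) :=
            (Finset.sum_mul _ _ _).symm
        _ = _ := by rw [pcnb_sum_ofReal hx hN, one_mul]
    calc (∫⁻ t, (‖k t‖₊ : ℝ≥0∞) ^ p.toReal ∂μ) ^ (1 / p.toReal)
        ≤ (ENNReal.ofReal Λ ^ p.toReal *
            ∫⁻ s, (‖g s‖₊ : ℝ≥0∞) ^ p.toReal ∂μ) ^ (1 / p.toReal) :=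
          ENNReal.rpow_le_rpow htotal (by positivity)
      _ = ENNReal.ofReal Λ * (∫⁻ s, (‖g s‖₊ : ℝ≥0∞) ^ p.toReal ∂μ) ^ (1 / p.toReal) := by
          rw [ENNReal.mul_rpow_of_nonneg _ _ (by positivity), ← ENNReal.rpow_mul,
            mul_one_div_cancel hq0.ne', ENNReal.rpow_one]

end Aux

/-- `h` is the image of `g` under the Read–Bajraktarević operator `T_{f,b}` with
scale functions `α`, almost everywhere: on each `I n`,
`h = f + (α n ∘ Lₙ⁻¹) · ((g - b) ∘ Lₙ⁻¹)`. -/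
def RBEq {N : ℕ} (μ : Measure ℝ) (x : Fin (N + 1) → ℝ) (α : Fin N → ℝ → ℝ)
    (f b g h : ℝ → ℝ) : Prop :=
  ∀ n : Fin N, ∀ᵐ t ∂μ, t ∈ subInt x n →
    h t = f t + α n (Linv x n t) * (g (Linv x n t) - b (Linv x n t))

/-- `h` satisfies the self-referential equation of `T_{f,b}`, i.e. `h` is a fixed
point of `T_{f,b}`; `h` is then the fractal convolution `f *_T b`. -/
def SelfRef {N : ℕ} (μ : Measure ℝ) (x : Fin (N + 1) → ℝ) (α : Fin N → ℝ → ℝ)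
    (f b h : ℝ → ℝ) : Prop :=
  RBEq μ x α f b h h

/-- The operator `P⁰₂ f = f *_T 0` satisfies
`‖(f *_T 0) − f‖_p ≤ Λ‖f *_T 0‖_p` and `‖f‖_p ≤ (1 + Λ)‖f *_T 0‖_p`; consequently
`P⁰₂` is injective and has closed range in `L^p(I)`. -/
theorem partial_convolution_null_base_properties
    (N : ℕ) (hN : 2 ≤ N) (x : Fin (N + 1) → ℝ) (hx : StrictMono x)
    (μ : Measure ℝ) (hμ : μ = volume.restrict (Set.Icc (x 0) (x (Fin.last N))))
    (p : ℝ≥0∞) [Fact (1 ≤ p)]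
    (α : Fin N → Lp ℝ ∞ μ)
    (Λ : ℝ) (hΛdef : Λ = ⨆ n : Fin N, ‖α n‖) (hΛ : Λ < 1)
    (P₂ : Lp ℝ p μ → Lp ℝ p μ)
    (hP₂ : ∀ f : Lp ℝ p μ, SelfRef μ x (fun n => ⇑(α n)) ⇑f ⇑(0 : Lp ℝ p μ) ⇑(P₂ f)) :
    (∀ f : Lp ℝ p μ, ‖P₂ f - f‖ ≤ Λ * ‖P₂ f‖) ∧
    (∀ f : Lp ℝ p μ, ‖f‖ ≤ (1 + Λ) * ‖P₂ f‖) ∧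
    Function.Injective P₂ ∧
    IsClosed (Set.range P₂) := by
  have hN0 : 0 < N := by omega
  have hp : 1 ≤ p := Fact.out
  have hp0 : p ≠ 0 := (lt_of_lt_of_le zero_lt_one hp).ne'
  have hbdd : BddAbove (Set.range fun n : Fin N => ‖α n‖) :=
    Set.Finite.bddAbove (Set.finite_range _)
  have hΛle : ∀ n : Fin N, ‖α n‖ ≤ Λ := fun n => hΛdef ▸ le_ciSup hbdd n
  have hΛ0 : 0 ≤ Λ := le_trans (norm_nonneg (α ⟨0, hN0⟩)) (hΛle ⟨0, hN0⟩)
  have hbound : ∀ n : Fin N, ∀ᵐ s ∂μ, (‖(α n) s‖₊ : ℝ≥0∞) ≤ ENNReal.ofReal Λ := by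
    intro n
    filter_upwards [ae_le_eLpNormEssSup (f := ⇑(α n)) (μ := μ)] with s hs
    refine hs.trans ?_
    have h1 : eLpNormEssSup (⇑(α n)) μ = eLpNorm (⇑(α n)) ∞ μ :=
      eLpNorm_exponent_top.symm
    have h2 : eLpNorm (⇑(α n)) ∞ μ = ENNReal.ofReal ‖α n‖ := by
      rw [Lp.norm_def, ENNReal.ofReal_toReal (Lp.eLpNorm_ne_top (α n))]
    rw [h1, h2]
    exact ENNReal.ofReal_le_ofReal (hΛle n)
  have hqmp : ∀ n : Fin N, Measure.QuasiMeasurePreserving (Linv x n)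
      (volume.restrict (subInt x n)) μ := fun n => hμ ▸ pcnb_qmp hx hN0 n
  have hμsum : μ = Measure.sum fun n : Fin N => volume.restrict (subInt x n) := by
    rw [hμ, ← pcnb_iUnion hx hN0,
      Measure.restrict_iUnion (pcnb_disjoint hx) fun n => pcnb_measurableSet n]
  have hres_le : ∀ n : Fin N, volume.restrict (subInt x n) ≤ μ := by
    intro n
    have h1 : volume.restrict (subInt x n) =
        (volume.restrict (Set.Icc (x 0) (x (Fin.last N)))).restrict (subInt x n) := by
      rw [Measure.restrict_restrict (pcnb_measurableSet n),
        Set.inter_eq_self_of_subset_left (pcnb_subset hx n)]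
    rw [hμ, h1]
    exact Measure.restrict_le_self
  have hz : ∀ᵐ s ∂μ, ((0 : Lp ℝ p μ) : ℝ → ℝ) s = 0 := by
    filter_upwards [Lp.coeFn_zero ℝ p μ] with s hs
    simpa using hs
  have hself : ∀ f : Lp ℝ p μ, ∀ n : Fin N, ∀ᵐ t ∂(volume.restrict (subInt x n)),
      (P₂ f) t = f t + (α n) (Linv x n t) * (P₂ f) (Linv x n t) := by
    intro f n
    have h1 := Filter.Eventually.filter_mono (Measure.absolutelyContinuous_of_le (hres_le n)).ae_le (hP₂ f n)
    have h2 : ∀ᵐ t ∂(volume.restrict (subInt x n)), t ∈ subInt x n :=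
      ae_restrict_mem (pcnb_measurableSet n)
    have h3 := (hqmp n).ae hz
    filter_upwards [h1, h2, h3] with t h1t h2t h3t
    rw [h1t h2t, h3t, sub_zero]
  have hkey1 : ∀ f : Lp ℝ p μ,
      eLpNorm (⇑(P₂ f) - ⇑f) p μ ≤ ENNReal.ofReal Λ * eLpNorm (⇑(P₂ f)) p μ := by
    intro f
    refine pcnb_key hx hN0 hμ hp _ hbound (fun n => Lp.aestronglyMeasurable (α n))
      (Lp.aestronglyMeasurable (P₂ f)) ?_
    intro n
    filter_upwards [hself f n] with t ht
    simp only [Pi.sub_apply]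
    rw [ht]; ring
  have hnorm1 : ∀ f : Lp ℝ p μ, ‖P₂ f - f‖ ≤ Λ * ‖P₂ f‖ := by
    intro f
    have he : eLpNorm (⇑(P₂ f - f)) p μ = eLpNorm (⇑(P₂ f) - ⇑f) p μ :=
      eLpNorm_congr_ae (Lp.coeFn_sub _ _)
    have h3 : ENNReal.ofReal Λ * eLpNorm (⇑(P₂ f)) p μ ≠ ∞ :=
      ENNReal.mul_ne_top ENNReal.ofReal_ne_top (Lp.eLpNorm_ne_top _)
    rw [Lp.norm_def, he]
    calc (eLpNorm (⇑(P₂ f) - ⇑f) p μ).toReal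
        ≤ (ENNReal.ofReal Λ * eLpNorm (⇑(P₂ f)) p μ).toReal :=
          ENNReal.toReal_mono h3 (hkey1 f)
      _ = Λ * ‖P₂ f‖ := by
          rw [ENNReal.toReal_mul, ENNReal.toReal_ofReal hΛ0, Lp.norm_def]
  have hnorm2 : ∀ f : Lp ℝ p μ, ‖f‖ ≤ (1 + Λ) * ‖P₂ f‖ := by
    intro f
    have h1 : f = P₂ f - (P₂ f - f) := by abel
    calc ‖f‖ = ‖P₂ f - (P₂ f - f)‖ := by rw [← h1]
      _ ≤ ‖P₂ f‖ + ‖P₂ f - f‖ := norm_sub_le _ _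
      _ ≤ ‖P₂ f‖ + Λ * ‖P₂ f‖ := by linarith [hnorm1 f]
      _ = (1 + Λ) * ‖P₂ f‖ := by ring
  have huniq : ∀ (u : ℝ → ℝ) (h₁ h₂ : Lp ℝ p μ),
      (∀ n : Fin N, ∀ᵐ t ∂(volume.restrict (subInt x n)),
        h₁ t = u t + (α n) (Linv x n t) * h₁ (Linv x n t)) →
      (∀ n : Fin N, ∀ᵐ t ∂(volume.restrict (subInt x n)),
        h₂ t = u t + (α n) (Linv x n t) * h₂ (Linv x n t)) → h₁ = h₂ := by
    intro u h₁ h₂ he₁ he₂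
    have hd : ∀ n : Fin N, ∀ᵐ t ∂(volume.restrict (subInt x n)),
        (⇑h₁ - ⇑h₂) t = (α n) (Linv x n t) * (⇑h₁ - ⇑h₂) (Linv x n t) := by
      intro n
      filter_upwards [he₁ n, he₂ n] with t ht1 ht2
      simp only [Pi.sub_apply]
      rw [ht1, ht2]; ring
    have hk := pcnb_key hx hN0 hμ hp _ hbound (fun n => Lp.aestronglyMeasurable (α n))
      ((Lp.aestronglyMeasurable h₁).sub (Lp.aestronglyMeasurable h₂)) hd
    have hfin : eLpNorm (⇑h₁ - ⇑h₂) p μ ≠ ∞ := by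
      rw [← eLpNorm_congr_ae (Lp.coeFn_sub h₁ h₂)]
      exact Lp.eLpNorm_ne_top (h₁ - h₂)
    have h0 : eLpNorm (⇑h₁ - ⇑h₂) p μ = 0 := by
      by_contra h0
      have hlt : ENNReal.ofReal Λ * eLpNorm (⇑h₁ - ⇑h₂) p μ < eLpNorm (⇑h₁ - ⇑h₂) p μ := by
        calc ENNReal.ofReal Λ * eLpNorm (⇑h₁ - ⇑h₂) p μ
            < 1 * eLpNorm (⇑h₁ - ⇑h₂) p μ :=
              ENNReal.mul_left_strictMono h0 hfin (ENNReal.ofReal_lt_one.2 hΛ)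
          _ = eLpNorm (⇑h₁ - ⇑h₂) p μ := one_mul _
      exact absurd hk (not_le.2 hlt)
    have hae0 : (⇑h₁ - ⇑h₂ : ℝ → ℝ) =ᵐ[μ] 0 :=
      (eLpNorm_eq_zero_iff ((Lp.aestronglyMeasurable h₁).sub (Lp.aestronglyMeasurable h₂))
        hp0).1 h0
    apply Lp.ext
    filter_upwards [hae0] with t ht
    have : h₁ t - h₂ t = 0 := ht
    linarith
  have hinj : Function.Injective P₂ := by
    intro f g hfg
    have hae : ∀ n : Fin N, ∀ᵐ t ∂(volume.restrict (subInt x n)), f t = g t := by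
      intro n
      filter_upwards [hself f n, hself g n] with t h1 h2
      rw [hfg] at h1
      exact add_right_cancel (h1.symm.trans h2)
    apply Lp.ext
    have hμae : ae μ = ⨆ n : Fin N, ae (volume.restrict (subInt x n)) := by
      conv_lhs => rw [hμsum]
      exact Measure.ae_sum_eq _
    exact hμae ▸ Filter.eventually_iSup.2 hae
  have hPsub : ∀ f g : Lp ℝ p μ, P₂ (f - g) = P₂ f - P₂ g := by
    intro f g
    refine huniq (⇑(f - g)) (P₂ (f - g)) (P₂ f - P₂ g) (hself (f - g)) ?_
    intro n
    have h3 := Filter.Eventually.filter_mono (Measure.absolutelyContinuous_of_le (hres_le n)).ae_le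
      (Lp.coeFn_sub (P₂ f) (P₂ g))
    have h4 := (hqmp n).ae_eq (Lp.coeFn_sub (P₂ f) (P₂ g))
    have h5 := Filter.Eventually.filter_mono (Measure.absolutelyContinuous_of_le (hres_le n)).ae_le
      (Lp.coeFn_sub f g)
    filter_upwards [hself f n, hself g n, h3, h4, h5] with t h1t h2t h3t h4t h5t
    have h4t' : (P₂ f - P₂ g) (Linv x n t) = (⇑(P₂ f) - ⇑(P₂ g)) (Linv x n t) := h4t
    rw [h3t, h5t, h4t']
    simp only [Pi.sub_apply]
    rw [h1t, h2t]; ring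
  have hub : ∀ u : Lp ℝ p μ, ‖P₂ u‖ ≤ (1 - Λ)⁻¹ * ‖u‖ := by
    intro u
    have h2 : 0 < 1 - Λ := by linarith
    have h1 : ‖P₂ u‖ ≤ ‖u‖ + Λ * ‖P₂ u‖ := by
      have he : u + (P₂ u - u) = P₂ u := by abel
      calc ‖P₂ u‖ = ‖u + (P₂ u - u)‖ := by rw [he]
        _ ≤ ‖u‖ + ‖P₂ u - u‖ := norm_add_le _ _
        _ ≤ ‖u‖ + Λ * ‖P₂ u‖ := by linarith [hnorm1 u]
    have h3 : ‖P₂ u‖ * (1 - Λ) ≤ ‖u‖ := by nlinarith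
    calc ‖P₂ u‖ = ‖P₂ u‖ * (1 - Λ) * (1 - Λ)⁻¹ := by field_simp
      _ ≤ ‖u‖ * (1 - Λ)⁻¹ := mul_le_mul_of_nonneg_right h3 (inv_nonneg.2 h2.le)
      _ = (1 - Λ)⁻¹ * ‖u‖ := mul_comm _ _
  have hlip : LipschitzWith ((1 - Λ)⁻¹).toNNReal P₂ := by
    apply LipschitzWith.of_dist_le_mul
    intro f g
    rw [dist_eq_norm, dist_eq_norm, ← hPsub f g,
      Real.coe_toNNReal _ (inv_nonneg.2 (by linarith : (0:ℝ) ≤ 1 - Λ))]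
    exact hub (f - g)
  have hanti : AntilipschitzWith (1 + Λ).toNNReal P₂ := by
    apply AntilipschitzWith.of_le_mul_dist
    intro f g
    rw [dist_eq_norm, dist_eq_norm, ← hPsub f g,
      Real.coe_toNNReal _ (by linarith : (0:ℝ) ≤ 1 + Λ)]
    exact hnorm2 (f - g)
  exact ⟨hnorm1, hnorm2, hinj, hanti.isClosed_range hlip.uniformContinuous⟩

end
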